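/- Let c₀, c₁ be real constants and set α = c₁²/4 − c₀. If ρ : ℝ → ℝ is a non-constant differentiable function satisfying the ODE ρ'(t) = ρ(t)² + c₁ρ(t) + c₀ for all t ∈ ℝ, then α > 0 and there exists d ∈ ℝ such that ρ(t) = −c₁/2 − √α·tanh(√α(t+d)) for all t. -/

import Mathlib

open Set Filter Real Topology

/-- Derivative of `Real.tanh`. -/
lemma tanh_hasDerivAt (x : ℝ) : HasDerivAt Real.tanh (1 - Real.tanh x ^ 2) x := by
  have hc : Real.cosh x ≠ 0 := (Real.cosh_pos x).ne'
  have h := (Real.hasDerivAt_sinh x).div (Real.hasDerivAt_cosh x) hc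
  have hfun : (fun y => Real.sinh y / Real.cosh y) = Real.tanh := by
    funext y; rw [Real.tanh_eq_sinh_div_cosh]
  change HasDerivAt (fun y => Real.sinh y / Real.cosh y) _ x at h
  rw [hfun] at h
  convert h using 1
  rw [Real.tanh_eq_sinh_div_cosh]
  field_simp

lemma tanh_sq_lt_one (x : ℝ) : Real.tanh x ^ 2 < 1 := by
  have hc : 0 < Real.cosh x := Real.cosh_pos x
  rw [Real.tanh_eq_sinh_div_cosh, div_pow, div_lt_one (by positivity)]
  nlinarith [Real.cosh_sq_sub_sinh_sq x]

lemma abs_tanh_le_one (x : ℝ) : |Real.tanh x| ≤ 1 := by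
  nlinarith [_root_.tanh_sq_lt_one x, sq_abs (Real.tanh x), abs_nonneg (Real.tanh x)]

/-- `tanh` attains every value in `(-1, 1)`. -/
lemma exists_tanh_eq {y : ℝ} (h1 : -1 < y) (h2 : y < 1) : ∃ x, Real.tanh x = y := by
  have hy1 : (0:ℝ) < 1 + y := by linarith
  have hy2 : (0:ℝ) < 1 - y := by linarith
  set u : ℝ := (1 + y) / (1 - y) with hu
  have hu0 : 0 < u := by positivity
  refine ⟨Real.log u / 2, ?_⟩
  set x : ℝ := Real.log u / 2 with hx
  have hE : Real.exp x * Real.exp x = u := by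
    rw [← Real.exp_add]
    have hxx : x + x = Real.log u := by rw [hx]; ring
    rw [hxx, Real.exp_log hu0]
  have hE2 : Real.exp x * Real.exp x * (1 - y) = 1 + y := by
    rw [hE, hu]; field_simp
  have hEpos : 0 < Real.exp x := Real.exp_pos x
  have hden : Real.exp x + (Real.exp x)⁻¹ ≠ 0 := by positivity
  rw [Real.tanh_eq_sinh_div_cosh, Real.sinh_eq, Real.cosh_eq, Real.exp_neg]
  field_simp
  linear_combination hE2

/-- If `f t₀ ≥ a` and the derivative of `f` is positive whenever `f = a`,
then `f` stays `≥ a` to the right of `t₀`. -/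
lemma stay_above {f f' : ℝ → ℝ} (hf : ∀ t, HasDerivAt f (f' t) t) {a t₀ t₁ : ℝ}
    (h01 : t₀ ≤ t₁) (h0 : a ≤ f t₀) (hpos : ∀ t, f t = a → 0 < f' t) : a ≤ f t₁ := by
  by_contra hcon
  push_neg at hcon
  have hlt : t₀ < t₁ := by
    rcases eq_or_lt_of_le h01 with h | h
    · exact absurd (h ▸ h0) (not_le.mpr hcon)
    · exact h
  have hfc : Continuous f :=
    continuous_iff_continuousAt.mpr fun t => (hf t).differentiableAt.continuousAt
  set S : Set ℝ := Icc t₀ t₁ ∩ f ⁻¹' (Ici a) with hS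
  have hSne : S.Nonempty := ⟨t₀, ⟨le_rfl, h01⟩, h0⟩
  have hSbdd : BddAbove S := ⟨t₁, fun t ht => ht.1.2⟩
  have hSclosed : IsClosed S := (isClosed_Icc).inter (isClosed_Ici.preimage hfc)
  set c := sSup S with hc
  have hcS : c ∈ S := hSclosed.csSup_mem hSne hSbdd
  have hfc_ge : a ≤ f c := hcS.2
  have hct1 : c < t₁ := by
    rcases eq_or_lt_of_le hcS.1.2 with h | h
    · exact absurd (h ▸ hfc_ge) (not_le.mpr hcon)
    · exact h
  have hmem : Ioc c t₁ ∈ 𝓝[>] c := Ioc_mem_nhdsGT_of_mem ⟨le_rfl, hct1⟩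
  have hmem' : ∀ᶠ t in 𝓝[>] c, t ∈ Ioc c t₁ := eventually_mem_set.mpr hmem
  have key : ∃ t', t' ∈ Ioc c t₁ ∧ a ≤ f t' := by
    rcases eq_or_lt_of_le hfc_ge with heq | hgt
    · -- f c = a : use positive derivative
      have hd : 0 < f' c := hpos c heq.symm
      have hslope : Tendsto (slope f c) (𝓝[>] c) (𝓝 (f' c)) := by
        have h := (hf c).hasDerivWithinAt (s := Ioi c)
        rw [hasDerivWithinAt_iff_tendsto_slope] at h
        rwa [Set.diff_singleton_eq_self (by simp)] at h
      have hev : ∀ᶠ t in 𝓝[>] c, 0 < slope f c t :=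
        hslope.eventually (eventually_gt_nhds hd)
      obtain ⟨t', ht'1, ht'2⟩ := (hev.and hmem').exists
      refine ⟨t', ht'2, ?_⟩
      have htc : 0 < t' - c := sub_pos.mpr ht'2.1
      have hsl : 0 < (f t' - f c) / (t' - c) := by rwa [slope_def_field] at ht'1
      have h3 := mul_pos hsl htc
      rw [div_mul_cancel₀ _ htc.ne'] at h3
      linarith
    · -- f c > a : use continuity
      have hev : ∀ᶠ t in 𝓝[>] c, a < f t :=
        Filter.Eventually.filter_mono nhdsWithin_le_nhds
          ((hfc.continuousAt (x := c)).eventually (eventually_gt_nhds hgt))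
      obtain ⟨t', ht'1, ht'2⟩ := (hev.and hmem').exists
      exact ⟨t', ht'2, ht'1.le⟩
  obtain ⟨t', ht', hft'⟩ := key
  have : t' ≤ c := le_csSup hSbdd ⟨⟨hcS.1.1.trans ht'.1.le, ht'.2⟩, hft'⟩
  exact absurd ht'.1 (not_lt.mpr this)

/-- `α < 0` is impossible for a globally defined solution of `f' = f² - α`. -/
lemma alpha_nonneg {α : ℝ} {f : ℝ → ℝ}
    (hf : ∀ t, HasDerivAt f (f t ^ 2 - α) t) : 0 ≤ α := by
  by_contra hcon
  push_neg at hcon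
  set r := Real.sqrt (-α) with hrdef
  have hr : 0 < r := Real.sqrt_pos.mpr (by linarith)
  have hr2 : r ^ 2 = -α := Real.sq_sqrt (by linarith)
  set θ : ℝ → ℝ := fun t => Real.arctan (f t / r) with hθ
  have hθd : ∀ t, HasDerivAt θ r t := by
    intro t
    have h1 : HasDerivAt (fun s => f s / r) ((f t ^ 2 - α) / r) t := (hf t).div_const r
    have h2 : HasDerivAt θ (1 / (1 + (f t / r) ^ 2) * ((f t ^ 2 - α) / r)) t :=
      by have := (Real.hasDerivAt_arctan (f t / r)).comp t h1; exact this
    convert h2 using 1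
    have hpos : 0 < -α + f t ^ 2 := by nlinarith [sq_nonneg (f t)]
    have h3 : 1 + (f t / r) ^ 2 = (-α + f t ^ 2) / r ^ 2 := by
      rw [div_pow]
      field_simp
      linarith [hr2]
    rw [h3]
    field_simp
    ring_nf
  have hconst : ∀ t, θ t = θ 0 + r * t := by
    have hψ : ∀ t, HasDerivAt (fun s => θ s - r * s) 0 t := by
      intro t
      have h : HasDerivAt (fun s => θ s - r * s) (r - r * 1) t :=
        (hθd t).sub ((hasDerivAt_id t).const_mul r)
      rw [mul_one, sub_self] at h; exact h
    have hcst := is_const_of_deriv_eq_zero (𝕜 := ℝ)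
      (f := fun s => θ s - r * s) (fun s => (hψ s).differentiableAt)
      (fun s => (hψ s).deriv)
    intro t
    have h := hcst t 0
    simp only [mul_zero, sub_zero] at h
    linarith
  have h1 : θ (Real.pi / r) < Real.pi / 2 := Real.arctan_lt_pi_div_two _
  have h2 : -(Real.pi / 2) < θ 0 := Real.neg_pi_div_two_lt_arctan _
  have h3 : θ (Real.pi / r) = θ 0 + Real.pi := by
    rw [hconst, mul_div_cancel₀ _ hr.ne']
  linarith

/-- No globally defined solution of `f' = f² - α` (with `α ≥ 0`) can take a
positive value whose square exceeds `α`. -/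
lemma no_pos_escape {α : ℝ} (hα : 0 ≤ α) {f : ℝ → ℝ}
    (hf : ∀ t, HasDerivAt f (f t ^ 2 - α) t) (t₀ : ℝ)
    (h0 : 0 < f t₀) (h2 : α < f t₀ ^ 2) : False := by
  set a := f t₀ with ha
  have hinv : ∀ t, t₀ ≤ t → a ≤ f t := by
    intro t ht
    exact stay_above hf ht le_rfl (fun s hs => by rw [hs]; linarith)
  set c := 1 - α / a ^ 2 with hcdef
  have ha2 : 0 < a ^ 2 := by positivity
  have hc : 0 < c := by
    rw [hcdef, sub_pos, div_lt_one ha2]; exact h2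
  set ψ : ℝ → ℝ := fun t => c * t + (f t)⁻¹ with hψ
  have hψd : ∀ t, t₀ ≤ t → HasDerivAt ψ (c - (f t ^ 2 - α) / f t ^ 2) t := by
    intro t ht
    have hfne : f t ≠ 0 := by have := hinv t ht; linarith
    have h1 : HasDerivAt ψ (c * 1 + -(f t ^ 2 - α) / f t ^ 2) t :=
      ((hasDerivAt_id t).const_mul c).add ((hf t).inv hfne)
    convert h1 using 1
    ring
  have hanti : AntitoneOn ψ (Ici t₀) := by
    apply antitoneOn_of_deriv_nonpos (convex_Ici t₀)
    · intro t ht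
      exact ((hψd t ht).differentiableAt).continuousAt.continuousWithinAt
    · intro t ht
      rw [interior_Ici] at ht
      exact ((hψd t ht.le).differentiableAt).differentiableWithinAt
    · intro t ht
      rw [interior_Ici] at ht
      rw [(hψd t ht.le).deriv]
      have hft : a ≤ f t := hinv t ht.le
      have hfpos : 0 < f t := lt_of_lt_of_le h0 hft
      have hf2 : a ^ 2 ≤ f t ^ 2 := by nlinarith
      have hle : α / f t ^ 2 ≤ α / a ^ 2 := by
        rw [div_le_div_iff₀ (by positivity) ha2]
        nlinarith [mul_le_mul_of_nonneg_left hf2 hα]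
      have hrw : (f t ^ 2 - α) / f t ^ 2 = 1 - α / f t ^ 2 := by
        field_simp
      rw [hrw, hcdef]
      linarith
  set T := t₀ + (c * a)⁻¹ with hT
  have hTge : t₀ ≤ T := by
    have : 0 < (c * a)⁻¹ := by positivity
    rw [hT]; linarith
  have hmono : ψ T ≤ ψ t₀ := hanti self_mem_Ici hTge hTge
  have hfT : a ≤ f T := hinv _ hTge
  have hinvpos : 0 < (f T)⁻¹ := by
    apply inv_pos.mpr; linarith
  have hca : c * T = c * t₀ + a⁻¹ := by
    rw [hT]
    field_simp
  have hψT : ψ T = c * T + (f T)⁻¹ := rfl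
  have hψt₀ : ψ t₀ = c * t₀ + a⁻¹ := by
    have : ψ t₀ = c * t₀ + (f t₀)⁻¹ := rfl
    rw [this, ← ha]
  rw [hψT, hψt₀, hca] at hmono
  linarith

/-- Uniqueness of solutions of `f' = f² - α` staying in `[-√α, √α]`. -/
lemma eq_of_sol {α : ℝ} (hα : 0 < α) {f g : ℝ → ℝ}
    (hf : ∀ t, HasDerivAt f (f t ^ 2 - α) t)
    (hg : ∀ t, HasDerivAt g (g t ^ 2 - α) t)
    (hfs : ∀ t, |f t| ≤ Real.sqrt α) (hgs : ∀ t, |g t| ≤ Real.sqrt α)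
    (h0 : f 0 = g 0) : ∀ t, f t = g t := by
  set r := Real.sqrt α with hrdef
  have hr : 0 < r := Real.sqrt_pos.mpr hα
  set K : NNReal := ⟨2 * r, by positivity⟩ with hK
  have hv : ∀ s : ℝ, LipschitzOnWith K (fun x : ℝ => x ^ 2 - α) (Icc (-r) r) := by
    intro s
    rw [lipschitzOnWith_iff_dist_le_mul]
    intro x hx y hy
    rw [Real.dist_eq, Real.dist_eq]
    have h1 : x ^ 2 - α - (y ^ 2 - α) = (x + y) * (x - y) := by ring
    rw [h1, abs_mul]
    have h2 : |x| ≤ r := abs_le.mpr ⟨hx.1, hx.2⟩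
    have h3 : |y| ≤ r := abs_le.mpr ⟨hy.1, hy.2⟩
    have hxy : |x + y| ≤ 2 * r := (abs_add_le x y).trans (by linarith)
    have hK' : (K : ℝ) = 2 * r := rfl
    rw [hK']
    exact mul_le_mul_of_nonneg_right hxy (abs_nonneg _)
  intro t
  set T := |t| + 1 with hT
  have htmem : t ∈ Icc (-T) T := by
    constructor
    · have := neg_abs_le t; rw [hT]; linarith
    · have := le_abs_self t; rw [hT]; linarith
  have h0mem : (0:ℝ) ∈ Ioo (-T) T := by
    have hT0 : 0 < T := by rw [hT]; positivity
    exact ⟨by linarith, hT0⟩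
  exact ODE_solution_unique_of_mem_Icc (v := fun _ x => x ^ 2 - α)
    (s := fun _ => Icc (-r) r) (K := K) (fun s _ => hv s) h0mem
    (fun s _ => (hf s).continuousAt.continuousWithinAt)
    (fun s _ => hf s)
    (fun s _ => abs_le.mp (hfs s))
    (fun s _ => (hg s).continuousAt.continuousWithinAt)
    (fun s _ => hg s)
    (fun s _ => abs_le.mp (hgs s))
    h0 htmem

/-- If `ρ : ℝ → ℝ` is a non-constant differentiable function satisfying
`ρ'(t) = ρ(t)² + c₁ρ(t) + c₀` for all `t ∈ ℝ`, then `α = c₁²/4 − c₀ > 0` and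
there is a `d ∈ ℝ` with `ρ(t) = −c₁/2 − √α·tanh(√α(t+d))` for all `t`. -/
theorem riccati_global_solutions (c₀ c₁ : ℝ) (ρ : ℝ → ℝ)
    (hode : ∀ t : ℝ, HasDerivAt ρ (ρ t ^ 2 + c₁ * ρ t + c₀) t)
    (hnc : ¬ ∃ c : ℝ, ∀ t, ρ t = c) :
    0 < c₁ ^ 2 / 4 - c₀ ∧
      ∃ d : ℝ, ∀ t : ℝ,
        ρ t = -c₁ / 2 - Real.sqrt (c₁ ^ 2 / 4 - c₀)
            * Real.tanh (Real.sqrt (c₁ ^ 2 / 4 - c₀) * (t + d)) := by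
  set α := c₁ ^ 2 / 4 - c₀ with hαdef
  set f : ℝ → ℝ := fun t => ρ t + c₁ / 2 with hfdef
  have hf : ∀ t, HasDerivAt f (f t ^ 2 - α) t := by
    intro t
    have h1 : HasDerivAt f (ρ t ^ 2 + c₁ * ρ t + c₀) t := (hode t).add_const (c₁ / 2)
    convert h1 using 1
    have hft : f t = ρ t + c₁ / 2 := rfl
    rw [hft, hαdef]; ring
  have hα0 : 0 ≤ α := alpha_nonneg hf
  set g : ℝ → ℝ := fun t => -f (-t) with hgdef
  have hg : ∀ t, HasDerivAt g (g t ^ 2 - α) t := by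
    intro t
    have h1 : HasDerivAt (fun s : ℝ => f (-s)) ((f (-t) ^ 2 - α) * (-1)) t :=
      HasDerivAt.comp t (hf (-t)) (hasDerivAt_neg t)
    have h2 : HasDerivAt g (-((f (-t) ^ 2 - α) * (-1))) t := h1.neg
    convert h2 using 1
    have hgt : g t = -f (-t) := rfl
    rw [hgt]; ring
  have hbound : ∀ t, f t ^ 2 ≤ α := by
    intro t
    by_contra hcon
    push_neg at hcon
    rcases lt_trichotomy (f t) 0 with h1 | h1 | h1
    · have hgval : g (-t) = -f t := by
        have : g (-t) = -f (-(-t)) := rfl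
        rw [this, neg_neg]
      have hgt : 0 < g (-t) := by rw [hgval]; linarith
      have hg2 : α < g (-t) ^ 2 := by rw [hgval, neg_pow]; simpa using hcon
      exact no_pos_escape hα0 hg (-t) hgt hg2
    · rw [h1] at hcon; simp at hcon; linarith
    · exact no_pos_escape hα0 hf t h1 hcon
  have hαpos : 0 < α := by
    rcases hα0.lt_or_eq with h | h
    · exact h
    · exfalso
      apply hnc
      refine ⟨-c₁ / 2, fun t => ?_⟩
      have hb := hbound t
      rw [← h] at hb
      have hf0 : f t = 0 := by nlinarith [sq_nonneg (f t)]
      have hft : f t = ρ t + c₁ / 2 := rfl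
      rw [hft] at hf0
      linarith
  set r := Real.sqrt α with hrdef
  have hr : 0 < r := Real.sqrt_pos.mpr hαpos
  have hr2 : r ^ 2 = α := Real.sq_sqrt hα0
  have habs : ∀ t, |f t| ≤ r := by
    intro t
    have h1 := hbound t
    nlinarith [sq_abs (f t), abs_nonneg (f t)]
  have hconst_excl : ∀ b : ℝ, b ^ 2 = α → f 0 ≠ b := by
    intro b hb hfb
    have hcb : ∀ s : ℝ, HasDerivAt (fun _ : ℝ => b) (b ^ 2 - α) s := by
      intro s
      rw [hb, sub_self]
      exact hasDerivAt_const s b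
    have hbabs : ∀ _ : ℝ, |b| ≤ r := by
      intro _
      nlinarith [sq_abs b, abs_nonneg b]
    have hall := eq_of_sol hαpos hf hcb habs hbabs hfb
    apply hnc
    refine ⟨b - c₁ / 2, fun t => ?_⟩
    have h1 := hall t
    have hft : f t = ρ t + c₁ / 2 := rfl
    rw [hft] at h1
    linarith
  have hstrict : f 0 ^ 2 < α := by
    rcases (hbound 0).lt_or_eq with h | h
    · exact h
    · exfalso
      have h2 : f 0 ^ 2 = r ^ 2 := by rw [h, hr2]
      rcases sq_eq_sq_iff_eq_or_eq_neg.mp h2 with h3 | h3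
      · exact hconst_excl r hr2 h3
      · exact hconst_excl (-r) (by rw [neg_pow]; simpa using hr2) h3
  have hlt : |f 0| < r := by nlinarith [sq_abs (f 0), abs_nonneg (f 0)]
  obtain ⟨hlt1, hlt2⟩ := abs_lt.mp hlt
  have hy1 : -1 < -f 0 / r := by
    rw [lt_div_iff₀ hr]; linarith
  have hy2 : -f 0 / r < 1 := by
    rw [div_lt_one hr]; linarith
  obtain ⟨x, hx⟩ := exists_tanh_eq hy1 hy2
  refine ⟨hαpos, x / r, fun t => ?_⟩
  set w : ℝ → ℝ := fun t => -r * Real.tanh (r * (t + x / r)) with hwdef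
  have hw : ∀ s, HasDerivAt w (w s ^ 2 - α) s := by
    intro s
    have hinner : HasDerivAt (fun s : ℝ => r * (s + x / r)) r s := by
      simpa using ((hasDerivAt_id s).add_const (x / r)).const_mul r
    have houter : HasDerivAt (fun s : ℝ => Real.tanh (r * (s + x / r)))
        ((1 - Real.tanh (r * (s + x / r)) ^ 2) * r) s :=
      HasDerivAt.comp s (tanh_hasDerivAt _) hinner
    have hmain : HasDerivAt w (-r * ((1 - Real.tanh (r * (s + x / r)) ^ 2) * r)) s :=
      houter.const_mul (-r)
    convert hmain using 1
    have hws : w s = -r * Real.tanh (r * (s + x / r)) := rfl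
    rw [hws, ← hr2]; ring
  have hwabs : ∀ s, |w s| ≤ r := by
    intro s
    have hws : w s = -r * Real.tanh (r * (s + x / r)) := rfl
    rw [hws, abs_mul, abs_neg, abs_of_pos hr]
    calc r * |Real.tanh (r * (s + x / r))| ≤ r * 1 :=
          mul_le_mul_of_nonneg_left (abs_tanh_le_one _) hr.le
      _ = r := mul_one r
  have hw0 : f 0 = w 0 := by
    have hws : w 0 = -r * Real.tanh (r * (0 + x / r)) := rfl
    have harg : r * (0 + x / r) = x := by field_simp; ring
    rw [hws, harg, hx]
    field_simp
  have heq := eq_of_sol hαpos hf hw habs hwabs hw0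
  have h1 := heq t
  have hft : f t = ρ t + c₁ / 2 := rfl
  have hwt : w t = -r * Real.tanh (r * (t + x / r)) := rfl
  rw [hft, hwt] at h1
  linarith
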